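/- Let D ⊆ R^d be a nonempty closed convex set containing the origin, and let C be the cone generated by D (the closure of {a·v : a ≥ 0, v ∈ D}). Then for every x ∈ R^d, ‖P_D(x)‖₂ ≤ ‖P_C(x)‖₂. -/

import Mathlib

open scoped BigOperators RealInnerProductSpace

/-- Euclidean norm on `Fin d → ℝ`. -/
noncomputable def euclNorm {d : ℕ} (v : Fin d → ℝ) : ℝ := Real.sqrt (∑ j, v j ^ 2)

set_option maxHeartbeats 1000000 in
private lemma var_ineq {d : ℕ} {K : Set (EuclideanSpace ℝ (Fin d))} (hK : Convex ℝ K)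
    {x p : EuclideanSpace ℝ (Fin d)} (hp : p ∈ K)
    (hmin : ∀ z ∈ K, ‖x - p‖ ≤ ‖x - z‖) :
    ∀ z ∈ K, (inner ℝ (x - p) (z - p) : ℝ) ≤ 0 := by
  haveI : Nonempty K := ⟨⟨p, hp⟩⟩
  have h1 : ‖x - p‖ = ⨅ w : K, ‖x - w‖ := by
    refine le_antisymm (le_ciInf fun w => hmin w w.2) ?_
    have hb : BddBelow (Set.range fun w : K => ‖x - w‖) := by
      refine ⟨0, ?_⟩
      rintro r ⟨w, rfl⟩
      exact norm_nonneg _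
    exact ciInf_le (f := fun w : K => ‖x - w‖) hb ⟨p, hp⟩
  exact (norm_eq_iInf_iff_real_inner_le_zero hK hp).mp h1

set_option maxHeartbeats 1000000 in
/-- For a nonempty closed convex set `D` containing the origin and `C` the closed cone
generated by `D`, the projection onto `D` has norm at most that of the projection onto `C`. -/
theorem norm_proj_le_norm_proj_cone {d : ℕ} (D : Set (Fin d → ℝ)) (hDc : IsClosed D)
    (hDconv : Convex ℝ D) (h0 : (0 : Fin d → ℝ) ∈ D)
    (C : Set (Fin d → ℝ))
    (hC : C = closure {v | ∃ a : ℝ, 0 ≤ a ∧ ∃ u ∈ D, v = a • u})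
    (x pD pC : Fin d → ℝ)
    (hpD : pD ∈ D) (hnD : ∀ z ∈ D, euclNorm (x - pD) ≤ euclNorm (x - z))
    (hpC : pC ∈ C) (hnC : ∀ z ∈ C, euclNorm (x - pC) ≤ euclNorm (x - z)) :
    euclNorm pD ≤ euclNorm pC := by
  classical
  let E := EuclideanSpace ℝ (Fin d)
  let j : (Fin d → ℝ) → E := fun v => WithLp.toLp 2 v
  have hj : ∀ v w : Fin d → ℝ, j (v - w) = j v - j w := fun _ _ => rfl
  have hnorm : ∀ v : Fin d → ℝ, euclNorm v = ‖j v‖ := by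
    intro v
    rw [EuclideanSpace.norm_eq]
    simp [euclNorm, sq_abs, j]
  set S : Set (Fin d → ℝ) := {v | ∃ a : ℝ, 0 ≤ a ∧ ∃ u ∈ D, v = a • u} with hS
  have hDS : D ⊆ S := fun u hu => ⟨1, zero_le_one, u, hu, (one_smul ℝ u).symm⟩
  have hSsmul : ∀ t : ℝ, 0 ≤ t → ∀ v ∈ S, t • v ∈ S := by
    rintro t ht v ⟨a, ha, u, hu, rfl⟩
    exact ⟨t * a, mul_nonneg ht ha, u, hu, smul_smul t a u⟩
  have hSeq : S = (hDconv.toCone D : Set (Fin d → ℝ)) := by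
    ext v
    constructor
    · rintro ⟨a, ha, u, hu, rfl⟩
      rcases eq_or_lt_of_le ha with h | h
      · refine hDconv.mem_toCone.mpr ⟨1, zero_lt_one, 0, h0, ?_⟩
        simp [← h]
      · exact hDconv.mem_toCone.mpr ⟨a, h, u, hu, rfl⟩
    · intro hv
      rcases hDconv.mem_toCone.mp hv with ⟨c, hc, y, hy, rfl⟩
      exact ⟨c, hc.le, y, hy, rfl⟩
  have hSconv : Convex ℝ S := hSeq ▸ (hDconv.toCone D).convex
  have hCconv : Convex ℝ C := hC ▸ hSconv.closure
  have hCsmul : ∀ t : ℝ, 0 ≤ t → ∀ v ∈ C, t • v ∈ C := by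
    intro t ht v hv
    rw [hC] at hv ⊢
    have h1 : t • v ∈ closure ((t • ·) '' S) :=
      image_closure_subset_closure_image (continuous_const_smul t) ⟨v, hv, rfl⟩
    exact closure_mono (by rintro _ ⟨y, hy, rfl⟩; exact hSsmul t ht y hy) h1
  have hDC : D ⊆ C := fun u hu => hC ▸ subset_closure (hDS hu)
  have haddC : pD + pC ∈ C := by
    have hmid : (1/2 : ℝ) • pD + (1/2 : ℝ) • pC ∈ C :=
      hCconv (hDC hpD) hpC (by norm_num) (by norm_num) (by norm_num)
    have h2 := hCsmul 2 (by norm_num) _ hmid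
    rwa [smul_add, smul_smul, smul_smul, show (2:ℝ) * (1/2) = 1 by norm_num, one_smul,
      one_smul] at h2
  -- move to E
  let D' : Set E := WithLp.ofLp ⁻¹' D
  let C' : Set E := WithLp.ofLp ⁻¹' C
  have hD'conv : Convex ℝ D' := hDconv.linear_preimage (WithLp.linearEquiv 2 ℝ (Fin d → ℝ)).toLinearMap
  have hC'conv : Convex ℝ C' := hCconv.linear_preimage (WithLp.linearEquiv 2 ℝ (Fin d → ℝ)).toLinearMap
  have hvD : ∀ z ∈ D', inner ℝ (j x - j pD) (z - j pD) ≤ (0:ℝ) := by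
    refine var_ineq hD'conv hpD ?_
    intro z hz
    have h1 := hnD (WithLp.ofLp z) hz
    rw [hnorm, hnorm, hj, hj] at h1
    exact h1
  have hvC : ∀ z ∈ C', inner ℝ (j x - j pC) (z - j pC) ≤ (0:ℝ) := by
    refine var_ineq hC'conv hpC ?_
    intro z hz
    have h1 := hnC (WithLp.ofLp z) hz
    rw [hnorm, hnorm, hj, hj] at h1
    exact h1
  have h2C : (2:ℝ) • pC ∈ C := hCsmul 2 (by norm_num) _ hpC
  have hzeroC : (0 : Fin d → ℝ) ∈ C := hDC h0
  have e1 : inner ℝ (j x - j pC) (j pC) = (0:ℝ) := by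
    have ha := hvC (j 0) hzeroC
    have hb := hvC (j ((2:ℝ) • pC)) h2C
    have heq0 : j (0 : Fin d → ℝ) - j pC = -(j pC) := by
      rw [← hj, show (0:Fin d → ℝ) - pC = -pC by abel]; rfl
    have heq2 : j ((2:ℝ) • pC) - j pC = j pC := by
      rw [← hj, show (2:ℝ) • pC - pC = pC by module]
    rw [heq0, inner_neg_right] at ha
    rw [heq2] at hb
    linarith
  have e2 : inner ℝ (j x - j pC) (j pD) ≤ (0:ℝ) := by
    have hb := hvC (j (pD + pC)) haddC
    have heq : j (pD + pC) - j pC = j pD := by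
      rw [← hj, show pD + pC - pC = pD by abel]
    rwa [heq] at hb
  have e3 : ‖j pD‖^2 ≤ inner ℝ (j x) (j pD) := by
    have hb := hvD (j 0) h0
    have heq0 : j (0 : Fin d → ℝ) - j pD = -(j pD) := by
      rw [← hj, show (0:Fin d → ℝ) - pD = -pD by abel]; rfl
    rw [heq0, inner_neg_right, inner_sub_left] at hb
    have h1 : (inner ℝ (j pD) (j pD) : ℝ) ≤ inner ℝ (j x) (j pD) := by linarith
    rwa [real_inner_self_eq_norm_sq] at h1
  have e4 : (inner ℝ (j x) (j pD) : ℝ) ≤ ‖j pC‖ * ‖j pD‖ := by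
    have hsplit : (inner ℝ (j x) (j pD) : ℝ) = inner ℝ (j x - j pC) (j pD) + inner ℝ (j pC) (j pD) := by
      rw [inner_sub_left]; ring
    have hcs : (inner ℝ (j pC) (j pD) : ℝ) ≤ ‖j pC‖ * ‖j pD‖ := real_inner_le_norm _ _
    linarith
  rw [hnorm pD, hnorm pC]
  have hD0 : (0:ℝ) ≤ ‖j pD‖ := norm_nonneg _
  have hC0 : (0:ℝ) ≤ ‖j pC‖ := norm_nonneg _
  have key : ‖j pD‖^2 ≤ ‖j pC‖ * ‖j pD‖ := le_trans e3 e4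
  rcases eq_or_lt_of_le hD0 with h | h
  · rw [← h]; exact hC0
  · nlinarith
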